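/- Let x₁, x₂, x₃ : [0,∞) → ℝ with x₂ differentiable, x₂'(t) = r(x₂(t),x₃(t))·x₁(t) − d·x₂(t) for all t ≥ 0, and b₁ ≤ x₁(t) ≤ 1, 0 ≤ x₂(t) ≤ c₁/d, 0 ≤ x₃(t) ≤ c_{1,M}/d_M for all t ≥ 0, where b₁ = a/(a + q₁ + q₂c₁/d + q₃c_{1,M}/d_M). Set b₂ = c₁b₁/(d(1 + c₂c₁/d + c₃c_{1,M}/d_M)). Then for all t ≥ 0, x₂(t) ≥ b₂·(1 − e^{−dt}) + x₂(0)·e^{−dt}. -/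

import Mathlib

open Set Real

/-- lower bound on `x₂` by the solution of the comparison ODE
`z' = d b₂ - d z`, with `b₂ = c₁ b₁ / (d (1 + c₂ c₁/d + c₃ c₁M/dM))`. -/
theorem stmt_7
    (a q₁ c₁ d c₁M dM q₂ q₃ c₂ c₃ : ℝ)
    (ha : 0 < a) (hq₁ : 0 < q₁) (hc₁ : 0 < c₁) (hd : 0 < d)
    (hc₁M : 0 < c₁M) (hdM : 0 < dM) (hq₂ : 0 ≤ q₂) (hq₃ : 0 ≤ q₃)
    (hc₂ : 0 ≤ c₂) (hc₃ : 0 ≤ c₃)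
    (b₁ b₂ : ℝ)
    (hb₁ : b₁ = a / (a + q₁ + q₂ * (c₁ / d) + q₃ * (c₁M / dM)))
    (hb₂ : b₂ = c₁ * b₁ / (d * (1 + c₂ * (c₁ / d) + c₃ * (c₁M / dM))))
    (x₁ x₂ x₃ : ℝ → ℝ)
    (hx₂ : ∀ t ≥ (0:ℝ), HasDerivAt x₂
      (c₁ / (1 + c₂ * x₂ t + c₃ * x₃ t) * x₁ t - d * x₂ t) t)
    (hb : ∀ t ≥ (0:ℝ), x₁ t ∈ Icc b₁ 1 ∧ x₂ t ∈ Icc 0 (c₁ / d) ∧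
      x₃ t ∈ Icc 0 (c₁M / dM)) :
    ∀ t ≥ (0:ℝ), b₂ * (1 - Real.exp (-d * t))
      + x₂ 0 * Real.exp (-d * t) ≤ x₂ t := by
  set D : ℝ := 1 + c₂ * (c₁ / d) + c₃ * (c₁M / dM) with hD
  have hDpos : 0 < D := by rw [hD]; positivity
  have hb₁pos : 0 < b₁ := by rw [hb₁]; positivity
  set f : ℝ → ℝ := fun u => (x₂ u - b₂) * Real.exp (d * u) with hf
  have key : ∀ s ∈ Set.Ici (0:ℝ), HasDerivAt f
      ((c₁ / (1 + c₂ * x₂ s + c₃ * x₃ s) * x₁ s - d * b₂) * Real.exp (d * s)) s := by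
    intro s hs
    have h1 := (hx₂ s hs).sub_const b₂
    have h2 : HasDerivAt (fun u => Real.exp (d * u)) (d * Real.exp (d * s)) s := by
      exact ((Real.hasDerivAt_exp (d * s)).comp s
        ((hasDerivAt_id s).const_mul d)).congr_deriv (by ring)
    have h3 := h1.mul h2
    exact h3.congr_deriv (by ring)
  have hderiv_nonneg : ∀ s ∈ Set.Ici (0:ℝ),
      0 ≤ c₁ / (1 + c₂ * x₂ s + c₃ * x₃ s) * x₁ s - d * b₂ := by
    intro s hs
    obtain ⟨h1, h2, h3⟩ := hb s hs
    have hdenom1 : (1:ℝ) ≤ 1 + c₂ * x₂ s + c₃ * x₃ s := by nlinarith [h2.1, h3.1]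
    have hdenomD : 1 + c₂ * x₂ s + c₃ * x₃ s ≤ D := by
      rw [hD]
      have := mul_le_mul_of_nonneg_left h2.2 hc₂
      have := mul_le_mul_of_nonneg_left h3.2 hc₃
      linarith
    have hdbb : d * b₂ = c₁ * b₁ / D := by
      rw [hb₂]
      field_simp
    rw [hdbb]
    have hr : c₁ / D ≤ c₁ / (1 + c₂ * x₂ s + c₃ * x₃ s) :=
      div_le_div_of_nonneg_left hc₁.le (by linarith) hdenomD
    have hrpos : 0 < c₁ / D := by positivity
    have hx1 : b₁ ≤ x₁ s := h1.1
    have : c₁ / D * b₁ ≤ c₁ / (1 + c₂ * x₂ s + c₃ * x₃ s) * x₁ s :=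
      mul_le_mul hr hx1 hb₁pos.le (by positivity)
    have heq : c₁ * b₁ / D = c₁ / D * b₁ := by ring
    linarith [heq ▸ this]
  have mono : MonotoneOn f (Set.Ici 0) := by
    apply monotoneOn_of_deriv_nonneg (convex_Ici 0)
    · exact fun s hs => ((key s hs).continuousAt).continuousWithinAt
    · intro s hs
      rw [interior_Ici] at hs
      exact ((key s (le_of_lt hs : (0:ℝ) ≤ s)).differentiableAt).differentiableWithinAt
    · intro s hs
      rw [interior_Ici] at hs
      rw [(key s (le_of_lt hs : (0:ℝ) ≤ s)).deriv]
      exact mul_nonneg (hderiv_nonneg s (le_of_lt hs : (0:ℝ) ≤ s)) (Real.exp_pos _).le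
  intro t ht
  have hmt := mono (Set.self_mem_Ici) (Set.mem_Ici.mpr ht) ht
  simp only [hf, mul_zero, Real.exp_zero, mul_one] at hmt
  have hexp : Real.exp (-d * t) * Real.exp (d * t) = 1 := by
    rw [← Real.exp_add]; ring_nf; exact Real.exp_zero
  have hexppos : (0:ℝ) < Real.exp (-d * t) := Real.exp_pos _
  have h4 := mul_le_mul_of_nonneg_left hmt hexppos.le
  have h5 : Real.exp (-d * t) * ((x₂ t - b₂) * Real.exp (d * t)) = x₂ t - b₂ := by
    rw [show Real.exp (-d * t) * ((x₂ t - b₂) * Real.exp (d * t))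
        = (x₂ t - b₂) * (Real.exp (-d * t) * Real.exp (d * t)) from by ring, hexp, mul_one]
  rw [h5] at h4
  nlinarith [h4]
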